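/- If G is an almost bipartite graph (a graph with exactly one odd cycle), then n(G) - 1 ≤ α(G) + μ(G) ≤ n(G). -/

import Mathlib

open SimpleGraph

variable {V : Type*}

/-- A set of vertices is independent: no two of its vertices are adjacent. -/
def IsIndep (G : SimpleGraph V) (s : Set V) : Prop :=
  s.Pairwise fun a b => ¬ G.Adj a b

/-- The independence number α(G). -/
noncomputable def alphaNum (G : SimpleGraph V) : ℕ :=
  sSup {n | ∃ s : Set V, IsIndep G s ∧ s.ncard = n}

/-- The matching number μ(G). -/
noncomputable def muNum (G : SimpleGraph V) : ℕ :=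
  sSup {n | ∃ M : SimpleGraph.Subgraph G, M.IsMatching ∧ M.edgeSet.ncard = n}

/-- The neighborhood N(A) of a set of vertices. -/
def nbhd (G : SimpleGraph V) (A : Set V) : Set V := {v | ∃ a ∈ A, G.Adj a v}

/-- The difference d(A) = |A| - |N(A)| of a set of vertices. -/
noncomputable def diffSet (G : SimpleGraph V) (A : Set V) : ℤ :=
  (A.ncard : ℤ) - (nbhd G A).ncard

/-- The critical difference d(G). -/
noncomputable def critDiff (G : SimpleGraph V) : ℤ :=
  sSup {d | ∃ I : Set V, IsIndep G I ∧ diffSet G I = d}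

/-- A critical independent set: an independent set attaining the critical difference. -/
def IsCriticalIndep (G : SimpleGraph V) (A : Set V) : Prop :=
  IsIndep G A ∧ diffSet G A = critDiff G

/-- ker(G): the intersection of all critical independent sets. -/
noncomputable def kerSet (G : SimpleGraph V) : Set V :=
  ⋂₀ {A | IsCriticalIndep G A}

/-- A maximum independent set. -/
noncomputable def IsMaxIndep (G : SimpleGraph V) (S : Set V) : Prop :=
  IsIndep G S ∧ S.ncard = alphaNum G

/-- core(G): the intersection of all maximum independent sets. -/
noncomputable def coreSet (G : SimpleGraph V) : Set V :=
  ⋂₀ {S | IsMaxIndep G S}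

/-- A König–Egerváry graph: α(G) + μ(G) = n(G). -/
def KonigEgervary (G : SimpleGraph V) : Prop :=
  alphaNum G + muNum G = Nat.card V

/-- A graph is almost bipartite if it has exactly one odd cycle
(cycles being identified with their edge sets). -/
def AlmostBipartite (G : SimpleGraph V) : Prop :=
  ∃! s : Set (Sym2 V), ∃ (v : V) (w : G.Walk v v),
    w.IsCycle ∧ Odd w.length ∧ s = {e | e ∈ w.edges}

section Aux
variable [Fintype V] (G : SimpleGraph V)

lemma alpha_bddAbove : BddAbove {n | ∃ s : Set V, IsIndep G s ∧ s.ncard = n} := by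
  refine ⟨Nat.card V, ?_⟩
  rintro n ⟨s, _, rfl⟩
  exact (Set.ncard_le_ncard (Set.subset_univ s) Set.finite_univ).trans_eq (Set.ncard_univ _)

lemma mu_bddAbove : BddAbove {n | ∃ M : SimpleGraph.Subgraph G, M.IsMatching ∧ M.edgeSet.ncard = n} := by
  classical
  refine ⟨Nat.card (Sym2 V), ?_⟩
  rintro n ⟨M, _, rfl⟩
  exact (Set.ncard_le_ncard (Set.subset_univ M.edgeSet) Set.finite_univ).trans_eq (Set.ncard_univ _)

lemma alpha_le_of_indep {s : Set V} (hs : IsIndep G s) : s.ncard ≤ alphaNum G :=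
  le_csSup (alpha_bddAbove G) ⟨s, hs, rfl⟩

lemma mu_le_of_matching {M : SimpleGraph.Subgraph G} (hM : M.IsMatching) :
    M.edgeSet.ncard ≤ muNum G :=
  le_csSup (mu_bddAbove G) ⟨M, hM, rfl⟩

lemma alpha_attained : ∃ s : Set V, IsIndep G s ∧ s.ncard = alphaNum G := by
  have := Nat.sSup_mem (s := {n | ∃ s : Set V, IsIndep G s ∧ s.ncard = n})
    ⟨0, ∅, by simp [IsIndep], by simp⟩ (alpha_bddAbove G)
  exact this

lemma mu_attained : ∃ M : SimpleGraph.Subgraph G, M.IsMatching ∧ M.edgeSet.ncard = muNum G := by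
  have := Nat.sSup_mem
    (s := {n | ∃ M : SimpleGraph.Subgraph G, M.IsMatching ∧ M.edgeSet.ncard = n})
    ⟨0, ⊥, by intro v hv; simp at hv, by simp⟩ (mu_bddAbove G)
  exact this

lemma matching_edge_repr {M : SimpleGraph.Subgraph G} {x : V} {e : Sym2 V}
    (he : e ∈ M.edgeSet) (hx : x ∈ e) : ∃ y, M.Adj x y ∧ e = s(x, y) := by
  induction e with
  | _ a b =>
    rw [SimpleGraph.Subgraph.mem_edgeSet] at he
    rcases Sym2.mem_iff.mp hx with rfl | rfl
    · exact ⟨b, he, rfl⟩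
    · exact ⟨a, he.symm, Sym2.eq_swap⟩

lemma upper_bound : alphaNum G + muNum G ≤ Nat.card V := by
  classical
  obtain ⟨S, hS, hScard⟩ := alpha_attained G
  obtain ⟨M, hM, hMcard⟩ := mu_attained G
  have key : ∀ e : Sym2 V, ∃ x, e ∈ M.edgeSet → x ∈ e ∧ x ∉ S := by
    intro e
    by_cases he : e ∈ M.edgeSet
    · induction e with
      | _ a b =>
        rw [SimpleGraph.Subgraph.mem_edgeSet] at he
        have hadj := M.adj_sub he
        by_cases ha : a ∈ S
        · exact ⟨b, fun _ => ⟨by simp, fun hb => hS ha hb hadj.ne hadj⟩⟩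
        · exact ⟨a, fun _ => ⟨by simp, ha⟩⟩
    · exact ⟨e.out.1, fun h => absurd h he⟩
  choose f hf using key
  have hinj : Set.InjOn f M.edgeSet := by
    intro e he e' he' heq
    obtain ⟨hfe, _⟩ := hf e he
    obtain ⟨hfe', _⟩ := hf e' he'
    obtain ⟨y, hy, hey⟩ := matching_edge_repr G he hfe
    obtain ⟨y', hy', hey'⟩ := matching_edge_repr G he' (heq ▸ hfe')
    obtain ⟨w, _, huniq⟩ := hM (M.edge_vert hy)
    rw [hey, hey', heq, huniq y hy, huniq y' (heq ▸ hy')]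
  have hmaps : ∀ e ∈ M.edgeSet, f e ∈ Sᶜ := fun e he => (hf e he).2
  have hcard : M.edgeSet.ncard ≤ Sᶜ.ncard :=
    Set.ncard_le_ncard_of_injOn f hmaps hinj (Set.toFinite _)
  have hcompl : S.ncard + Sᶜ.ncard = Nat.card V := Set.ncard_add_ncard_compl S
  omega



end Aux

section BC
variable {G : SimpleGraph V}

lemma exists_closed_subwalk : ∀ {a d : V} (q : G.Walk a d), ¬ q.support.Nodup →
    ∃ (x : V) (w : G.Walk x x) (r : G.Walk a d),
      0 < w.length ∧ w.length + r.length = q.length := by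
  intro a d q
  classical
  induction q with
  | nil => intro h; simp at h
  | @cons a c d h' rr ih =>
    intro hnd
    rw [SimpleGraph.Walk.support_cons, List.nodup_cons] at hnd
    by_cases ha : a ∈ rr.support
    · refine ⟨a, SimpleGraph.Walk.cons h' (rr.takeUntil a ha), rr.dropUntil a ha, by simp, ?_⟩
      have hspec := congrArg SimpleGraph.Walk.length (rr.take_spec ha)
      rw [SimpleGraph.Walk.length_append] at hspec
      simp only [SimpleGraph.Walk.length_cons]
      omega
    · have hnd' : ¬ rr.support.Nodup := by tauto
      obtain ⟨x, w, r, hw, hl⟩ := ih hnd'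
      refine ⟨x, w, SimpleGraph.Walk.cons h' r, hw, ?_⟩
      simp only [SimpleGraph.Walk.length_cons]
      omega

lemma odd_cycle_of_odd_closed_walk : ∀ (n : ℕ) {u : V} (p : G.Walk u u),
    p.length = n → Odd p.length →
    ∃ (x : V) (w : G.Walk x x), w.IsCycle ∧ Odd w.length := by
  intro n
  induction n using Nat.strong_induction_on with
  | _ n ih =>
    intro u p hn hodd
    rw [Nat.odd_iff] at hodd
    cases p with
    | nil => simp at hodd
    | @cons _ b _ h q =>
      by_cases hq : q.support.Nodup
      · cases q with
        | nil => exact absurd rfl h.ne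
        | @cons _ c _ h' q' =>
          by_cases huc : u = c
          · subst huc
            have hlen : q'.length + 2 = n := by
              simpa [SimpleGraph.Walk.length_cons] using hn
            have hodd' : Odd q'.length := by
              rw [Nat.odd_iff]
              simp only [SimpleGraph.Walk.length_cons] at hodd
              omega
            exact ih q'.length (by omega) q' rfl hodd'
          · refine ⟨u, SimpleGraph.Walk.cons h (SimpleGraph.Walk.cons h' q'), ?_, ?_⟩
            · rw [SimpleGraph.Walk.cons_isCycle_iff]
              refine ⟨SimpleGraph.Walk.isPath_def _ |>.mpr hq, ?_⟩
              intro hmem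
              rw [SimpleGraph.Walk.edges_cons, List.mem_cons] at hmem
              rcases hmem with heq | hmem'
              · rw [Sym2.eq_iff] at heq
                rcases heq with ⟨h1, _⟩ | ⟨h1, _⟩
                · exact h.ne h1
                · exact huc h1
              · have hb : b ∈ q'.support :=
                  q'.snd_mem_support_of_mem_edges (by rwa [Sym2.eq_swap] at hmem')
                rw [SimpleGraph.Walk.support_cons, List.nodup_cons] at hq
                exact hq.1 hb
            · rw [Nat.odd_iff]; exact hodd
      · obtain ⟨x, w, r, hw, hl⟩ := exists_closed_subwalk q hq
        have hn' : 1 + (w.length + r.length) = n := by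
          rw [hl]
          simpa [SimpleGraph.Walk.length_cons, Nat.add_comm] using hn
        by_cases how : w.length % 2 = 1
        · exact ih w.length (by omega) w rfl (Nat.odd_iff.mpr how)
        · refine ih (SimpleGraph.Walk.cons h r).length (by simp [SimpleGraph.Walk.length_cons]; omega)
            (SimpleGraph.Walk.cons h r) rfl ?_
          rw [Nat.odd_iff]
          simp only [SimpleGraph.Walk.length_cons] at hodd ⊢
          omega

lemma exists_two_coloring
    (hnoodd : ∀ (x : V) (w : G.Walk x x), ¬(w.IsCycle ∧ Odd w.length)) :
    ∃ c : V → Bool, ∀ x y, G.Adj x y → c x ≠ c y := by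
  classical
  have hnow : ∀ (x : V) (w : G.Walk x x), ¬ Odd w.length := by
    intro x w how
    obtain ⟨y, w', hc', ho'⟩ := odd_cycle_of_odd_closed_walk w.length w rfl how
    exact hnoodd y w' ⟨hc', ho'⟩
  let root : V → V := fun v => (G.connectedComponentMk v).out
  have hroot : ∀ v, G.Reachable (root v) v := fun v =>
    ConnectedComponent.exact (Quot.out_eq (G.connectedComponentMk v))
  refine ⟨fun v => decide (∃ w : G.Walk (root v) v, Odd w.length), ?_⟩
  intro x y hadj hcc
  have hre : root y = root x := by
    have hmk : G.connectedComponentMk x = G.connectedComponentMk y :=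
      ConnectedComponent.sound hadj.reachable
    simp only [root, hmk]
  rw [decide_eq_decide] at hcc
  -- hcc : (∃ w : Walk (root x) x, Odd w.length) ↔ (∃ w : Walk (root y) y, Odd w.length)
  have key : ∃ (wx : G.Walk (root x) x) (wy : G.Walk (root y) y),
      wx.length % 2 = wy.length % 2 := by
    by_cases hx : ∃ w : G.Walk (root x) x, Odd w.length
    · obtain ⟨wx, hwx⟩ := hx
      obtain ⟨wy, hwy⟩ := hcc.mp ⟨wx, hwx⟩
      exact ⟨wx, wy, by rw [Nat.odd_iff] at hwx hwy; omega⟩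
    · have hy : ¬ ∃ w : G.Walk (root y) y, Odd w.length := fun h => hx (hcc.mpr h)
      push_neg at hx hy
      obtain ⟨wx⟩ := hroot x
      obtain ⟨wy⟩ := hroot y
      have h1 := hx wx
      have h2 := hy wy
      rw [Nat.not_odd_iff_even, Nat.even_iff] at h1 h2
      exact ⟨wx, wy, by omega⟩
  obtain ⟨wx, wy, hpar⟩ := key
  let wy' : G.Walk (root x) y := wy.copy hre rfl
  let cw : G.Walk (root x) (root x) :=
    (wx.append (SimpleGraph.Walk.cons hadj SimpleGraph.Walk.nil)).append wy'.reverse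
  have hcwlen : cw.length = wx.length + 1 + wy.length := by
    simp [cw, wy', SimpleGraph.Walk.length_append, SimpleGraph.Walk.length_reverse]
  exact hnow _ cw (by rw [Nat.odd_iff, hcwlen]; omega)

end BC

lemma matching_of_fun (G : SimpleGraph V) (P : Set V) (m : V → V)
    (hadj : ∀ x ∈ P, G.Adj x (m x)) (hmP : ∀ x ∈ P, m x ∉ P) (hinj : Set.InjOn m P) :
    ∃ M : G.Subgraph, M.IsMatching ∧ M.edgeSet = (fun x => s(x, m x)) '' P := by
  classical
  refine ⟨{ verts := P ∪ m '' P
            Adj := fun x y => (x ∈ P ∧ y = m x) ∨ (y ∈ P ∧ x = m y)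
            adj_sub := ?_
            edge_vert := ?_
            symm := ?_ }, ?_, ?_⟩
  · rintro x y (⟨hx, rfl⟩ | ⟨hy, rfl⟩)
    · exact hadj x hx
    · exact (hadj y hy).symm
  · rintro x y (⟨hx, rfl⟩ | ⟨hy, rfl⟩)
    · exact Or.inl hx
    · exact Or.inr ⟨y, hy, rfl⟩
  · constructor
    rintro x y (⟨hx, rfl⟩ | ⟨hy, rfl⟩)
    · exact Or.inr ⟨hx, rfl⟩
    · exact Or.inl ⟨hy, rfl⟩
  · rintro v (hv | ⟨u, hu, rfl⟩)
    · refine ⟨m v, Or.inl ⟨hv, rfl⟩, ?_⟩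
      rintro y (⟨_, rfl⟩ | ⟨hy, hvmy⟩)
      · rfl
      · exact absurd (hvmy ▸ hv) (hmP y hy)
    · refine ⟨u, Or.inr ⟨hu, rfl⟩, ?_⟩
      rintro y (⟨hmu, rfl⟩ | ⟨hy, hmy⟩)
      · exact absurd hmu (hmP u hu)
      · exact hinj hy hu hmy.symm
  · ext e
    induction e with
    | _ a b =>
      simp only [SimpleGraph.Subgraph.mem_edgeSet, Set.mem_image]
      constructor
      · rintro (⟨ha, rfl⟩ | ⟨hb, rfl⟩)
        · exact ⟨a, ha, rfl⟩
        · exact ⟨b, hb, Sym2.eq_swap⟩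
      · rintro ⟨x, hx, hxe⟩
        rw [Sym2.eq_iff] at hxe
        rcases hxe with ⟨rfl, rfl⟩ | ⟨h1, h2⟩
        · exact Or.inl ⟨hx, rfl⟩
        · subst h1; exact Or.inr ⟨hx, h2.symm⟩

lemma card_matching_of_fun (G : SimpleGraph V) (P : Set V) (m : V → V)
    (hmP : ∀ x ∈ P, m x ∉ P) (hinj : Set.InjOn m P) :
    ((fun x => s(x, m x)) '' P).ncard = P.ncard := by
  apply Set.ncard_image_of_injOn
  intro x hx y hy hxy
  rw [Sym2.eq_iff] at hxy
  rcases hxy with ⟨rfl, _⟩ | ⟨h1, h2⟩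
  · rfl
  · exact absurd (h1 ▸ hx) (hmP y hy)

lemma konig [Fintype V] (H G : SimpleGraph V) (hle : H ≤ G) (c : V → Bool)
    (hc : ∀ x y, H.Adj x y → c x ≠ c y) :
    ∃ (S : Set V) (M : G.Subgraph), IsIndep H S ∧ M.IsMatching ∧
      Nat.card V ≤ S.ncard + M.edgeSet.ncard := by
  classical
  let nbr : V → Finset V := fun x => Finset.univ.filter (fun y => H.Adj x y)
  have hnbr_mem : ∀ x y, y ∈ nbr x ↔ H.Adj x y := by intro x y; simp [nbr]
  let AF : Finset V := Finset.univ.filter (fun x => c x = true)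
  let BF : Finset V := Finset.univ.filter (fun x => c x = false)
  let ι := {x : V // c x = true}
  let nbrv : ι → Finset V := fun i => nbr i.1
  let g : Finset ι → ℕ := fun W => W.card - (W.biUnion nbrv).card
  let d : ℕ := Finset.univ.sup g
  let t : ι → Finset (V ⊕ Fin d) := fun i =>
    ((nbrv i).image Sum.inl) ∪ (Finset.univ.image (Sum.inr : Fin d → V ⊕ Fin d))
  have hhall : ∀ s : Finset ι, s.card ≤ (s.biUnion t).card := by
    intro s
    rcases s.eq_empty_or_nonempty with rfl | hne
    · simp
    · have hsup : s.card - (s.biUnion nbrv).card ≤ d :=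
        Finset.le_sup (f := g) (Finset.mem_univ s)
      have hbu : s.biUnion t =
          ((s.biUnion nbrv).image Sum.inl) ∪
            (Finset.univ.image (Sum.inr : Fin d → V ⊕ Fin d)) := by
        ext z
        simp only [Finset.mem_biUnion, Finset.mem_union, Finset.mem_image, t]
        constructor
        · rintro ⟨i, hi, hz | hz⟩
          · obtain ⟨y, hy, rfl⟩ := hz
            exact Or.inl ⟨y, ⟨i, hi, hy⟩, rfl⟩
          · exact Or.inr hz
        · rintro (⟨y, ⟨i, hi, hy⟩, rfl⟩ | hz)
          · exact ⟨i, hi, Or.inl ⟨y, hy, rfl⟩⟩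
          · obtain ⟨i, hi⟩ := hne
            exact ⟨i, hi, Or.inr hz⟩
      have hdisj : Disjoint ((s.biUnion nbrv).image Sum.inl)
          ((Finset.univ : Finset (Fin d)).image (Sum.inr : Fin d → V ⊕ Fin d)) := by
        simp only [Finset.disjoint_left, Finset.mem_image]
        rintro z ⟨y, _, rfl⟩ ⟨j, _, hj⟩
        exact Sum.inl_ne_inr hj.symm
      rw [hbu, Finset.card_union_of_disjoint hdisj,
        Finset.card_image_of_injective _ Sum.inl_injective,
        Finset.card_image_of_injective _ Sum.inr_injective, Finset.card_univ, Fintype.card_fin]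
      omega
  obtain ⟨f, hfinj, hft⟩ := (Finset.all_card_le_biUnion_card_iff_exists_injective t).mp hhall
  let PF : Finset ι := Finset.univ.filter (fun i => (f i).isLeft)
  let m : V → V := fun x => if hx : c x = true then ((f ⟨x, hx⟩).getLeft?).getD x else x
  have hPFf : ∀ i ∈ PF, f i = Sum.inl (m i.1) := by
    intro i hi
    have hleft : (f i).isLeft := (Finset.mem_filter.mp hi).2
    cases hfi : f i with
    | inl y =>
      simp only [m, dif_pos i.2, Subtype.coe_eta, hfi, Sum.getLeft?, Option.getD_some]
    | inr j => rw [hfi] at hleft; simp at hleft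
  let P : Set V := Subtype.val '' (PF : Set ι)
  have hPmem : ∀ x, x ∈ P ↔ ∃ hx : c x = true, (⟨x, hx⟩ : ι) ∈ PF := by
    intro x; constructor
    · rintro ⟨i, hi, rfl⟩; exact ⟨i.2, by simpa using hi⟩
    · rintro ⟨hx, hmem⟩; exact ⟨⟨x, hx⟩, hmem, rfl⟩
  have hadjP : ∀ x ∈ P, H.Adj x (m x) := by
    intro x hx
    obtain ⟨hxc, hmem⟩ := (hPmem x).mp hx
    have hmm := hft ⟨x, hxc⟩
    rw [hPFf ⟨x, hxc⟩ hmem] at hmm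
    simp only [t, Finset.mem_union, Finset.mem_image] at hmm
    rcases hmm with ⟨y, hy, hyx⟩ | ⟨j, _, hj⟩
    · exact (Sum.inl.inj hyx) ▸ (hnbr_mem x y).mp hy
    · exact absurd hj (by simp)
  have hcP : ∀ x ∈ P, c x = true := fun x hx => ((hPmem x).mp hx).1
  have hcmP : ∀ x ∈ P, c (m x) = false := by
    intro x hx
    have hne := hc x (m x) (hadjP x hx)
    rw [hcP x hx] at hne
    exact Bool.not_eq_true _ |>.symm ▸ (by simpa using hne.symm)
  have hmP : ∀ x ∈ P, m x ∉ P := by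
    intro x hx hmx
    have h1 := hcP (m x) hmx
    have h2 := hcmP x hx
    rw [h1] at h2; simp at h2
  have hinjm : Set.InjOn m P := by
    intro x hx y hy hxy
    obtain ⟨hxc, hxm⟩ := (hPmem x).mp hx
    obtain ⟨hyc, hym⟩ := (hPmem y).mp hy
    have heq : f ⟨x, hxc⟩ = f ⟨y, hyc⟩ := by rw [hPFf _ hxm, hPFf _ hym, hxy]
    exact congrArg Subtype.val (hfinj heq)
  obtain ⟨M, hMmatch, hMedge⟩ := matching_of_fun G P m (fun x hx => hle (hadjP x hx)) hmP hinjm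
  have hMcard : M.edgeSet.ncard = P.ncard := by
    rw [hMedge]; exact card_matching_of_fun G P m hmP hinjm
  have hPcard : P.ncard = PF.card := by
    rw [Set.ncard_image_of_injective _ Subtype.val_injective, Set.ncard_coe_finset]
  -- PF.card + d ≥ card ι
  have hPFcard : Fintype.card ι ≤ PF.card + d := by
    have hinr : (Finset.univ.filter (fun i : ι => ¬ (f i).isLeft)).card ≤ d := by
      have hcc : (Finset.univ.filter (fun i : ι => ¬ (f i).isLeft)).card ≤
          ((Finset.univ : Finset (Fin d)).image (Sum.inr : Fin d → V ⊕ Fin d)).card := by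
        apply Finset.card_le_card_of_injOn f
        · intro i hi
          have hnl : ¬ (f i).isLeft := (Finset.mem_filter.mp hi).2
          cases hfi : f i with
          | inl y => rw [hfi] at hnl; simp at hnl
          | inr j => simp
        · exact fun a _ b _ hfab => hfinj hfab
      simpa [Finset.card_image_of_injective _ Sum.inr_injective] using hcc
    have hsplit := Finset.card_filter_add_card_filter_not
      (s := (Finset.univ : Finset ι)) (p := fun i : ι => (f i).isLeft)
    rw [Finset.card_univ] at hsplit
    have he1 : PF.card = (Finset.univ.filter (fun i : ι => (f i).isLeft = true)).card := rfl
    have he2 : d = Finset.univ.sup g := rfl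
    omega
  -- maximizer
  obtain ⟨W₀, -, hW₀⟩ := Finset.exists_mem_eq_sup (Finset.univ : Finset (Finset ι))
    ⟨∅, Finset.mem_univ ∅⟩ g
  have hWex : ∃ W : Finset ι, W.card = (W.biUnion nbrv).card + d := by
    by_cases hb : (W₀.biUnion nbrv).card ≤ W₀.card
    · refine ⟨W₀, ?_⟩
      have hd0 : d = g W₀ := hW₀
      simp only [g] at hd0
      omega
    · refine ⟨∅, ?_⟩
      have hd0 : d = g W₀ := hW₀
      have hg0 : g W₀ = 0 := by simp only [g]; omega
      simp [hd0, hg0]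
  obtain ⟨W, hW⟩ := hWex
  let NF : Finset V := W.biUnion nbrv
  let SF : Finset V := (W.image Subtype.val) ∪ (BF \ NF)
  have hNFB : NF ⊆ BF := by
    intro y hy
    obtain ⟨i, hi, hyn⟩ := Finset.mem_biUnion.mp hy
    have hadj : H.Adj i.1 y := (hnbr_mem _ _).mp hyn
    have hne := hc _ _ hadj
    rw [i.2] at hne
    simp only [BF, Finset.mem_filter, Finset.mem_univ, true_and]
    simpa using hne.symm
  have hmemSF : ∀ x ∈ SF, (c x = true ∧ ∃ i ∈ W, i.1 = x) ∨ (c x = false ∧ x ∉ NF) := by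
    intro x hx
    rcases Finset.mem_union.mp hx with hx | hx
    · obtain ⟨i, hi, rfl⟩ := Finset.mem_image.mp hx
      exact Or.inl ⟨i.2, i, hi, rfl⟩
    · obtain ⟨hxB, hxN⟩ := Finset.mem_sdiff.mp hx
      exact Or.inr ⟨(Finset.mem_filter.mp hxB).2, hxN⟩
  have hSFindep : IsIndep H (↑SF : Set V) := by
    intro x hx y hy hne hadj
    rcases hmemSF x (by simpa using hx) with ⟨hcx, i, hiW, hix⟩ | ⟨hcx, hxN⟩ <;>
      rcases hmemSF y (by simpa using hy) with ⟨hcy, j, hjW, hjy⟩ | ⟨hcy, hyN⟩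
    · exact hc x y hadj (by rw [hcx, hcy])
    · exact hyN (Finset.mem_biUnion.mpr ⟨i, hiW, (hnbr_mem _ _).mpr (hix ▸ hadj)⟩)
    · exact hxN (Finset.mem_biUnion.mpr ⟨j, hjW, (hnbr_mem _ _).mpr (hjy ▸ hadj.symm)⟩)
    · exact hc x y hadj (by rw [hcx, hcy])
  have hSFcard : SF.card = W.card + (BF.card - NF.card) := by
    have hdisj : Disjoint (W.image Subtype.val) (BF \ NF) := by
      simp only [Finset.disjoint_left]
      rintro z hz hzB
      obtain ⟨i, _, rfl⟩ := Finset.mem_image.mp hz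
      have : c i.1 = false := (Finset.mem_filter.mp (Finset.mem_sdiff.mp hzB).1).2
      rw [i.2] at this; simp at this
    rw [Finset.card_union_of_disjoint hdisj,
      Finset.card_image_of_injective _ Subtype.val_injective, Finset.card_sdiff_of_subset hNFB]
  have hNFle : NF.card ≤ BF.card := Finset.card_le_card hNFB
  have hABcard : AF.card + BF.card = Fintype.card V := by
    have := Finset.card_filter_add_card_filter_not
      (s := (Finset.univ : Finset V)) (p := fun x => c x = true)
    rw [Finset.card_univ] at this
    have hBeq : BF = Finset.univ.filter (fun x => ¬ c x = true) := by
      ext x; simp [BF]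
    rw [hBeq]
    exact this
  have hιcard : Fintype.card ι = AF.card := by
    simp [ι, AF, Fintype.card_subtype]
  refine ⟨(↑SF : Set V), M, hSFindep, hMmatch, ?_⟩
  rw [Set.ncard_coe_finset, hMcard, hPcard, Nat.card_eq_fintype_card]
  have he3 : NF.card = (W.biUnion nbrv).card := rfl
  omega


theorem stmt_1 [Fintype V] (G : SimpleGraph V) (h : AlmostBipartite G) :
    Nat.card V - 1 ≤ alphaNum G + muNum G ∧ alphaNum G + muNum G ≤ Nat.card V := by
  classical
  refine ⟨?_, upper_bound G⟩
  obtain ⟨s₀, ⟨v₀, w₀, hcyc, hodd, hs₀⟩, huniq⟩ := h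
  let H : SimpleGraph V :=
    { Adj := fun x y => G.Adj x y ∧ x ≠ v₀ ∧ y ≠ v₀
      symm := by constructor; rintro x y ⟨h1, h2, h3⟩; exact ⟨h1.symm, h3, h2⟩
      loopless := by constructor; rintro x ⟨h1, _, _⟩; exact G.irrefl h1 }
  have hle : H ≤ G := fun x y hxy => hxy.1
  have hedge : ∃ e ∈ w₀.edges, v₀ ∈ e := by
    cases w₀ with
    | nil => exact absurd rfl hcyc.ne_nil
    | @cons _ b _ h' q =>
      exact ⟨s(v₀, b), by simp [SimpleGraph.Walk.edges_cons], by simp⟩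
  have hnoodd : ∀ (x : V) (w : H.Walk x x), ¬(w.IsCycle ∧ Odd w.length) := by
    rintro x w ⟨hwc, hwo⟩
    let wG : G.Walk x x := w.mapLe hle
    have hG : wG.IsCycle := (SimpleGraph.Walk.mapLe_isCycle (G := H) (G' := G) hle).mpr hwc
    have hlen : wG.length = w.length := by
      simp [wG, SimpleGraph.Walk.mapLe, SimpleGraph.Walk.length_map]
    have hsG : {e | e ∈ wG.edges} = s₀ :=
      huniq _ ⟨x, wG, hG, by rw [hlen]; exact hwo, rfl⟩
    obtain ⟨e, he, hv⟩ := hedge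
    have heG : e ∈ wG.edges := by
      have hes : e ∈ s₀ := hs₀ ▸ (show e ∈ {e | e ∈ w₀.edges} from he)
      rw [← hsG] at hes; exact hes
    have hedges : wG.edges = w.edges := by
      have hfun : ⇑(SimpleGraph.Hom.ofLE hle) = id := rfl
      simp [wG, SimpleGraph.Walk.mapLe, SimpleGraph.Walk.edges_map, hfun, Sym2.map_id,
        List.map_id]
    rw [hedges] at heG
    have heH : e ∈ H.edgeSet := w.edges_subset_edgeSet heG
    induction e with
    | _ a b =>
      rw [SimpleGraph.mem_edgeSet] at heH
      rcases Sym2.mem_iff.mp hv with rfl | rfl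
      · exact heH.2.1 rfl
      · exact heH.2.2 rfl
  obtain ⟨c, hc⟩ := exists_two_coloring hnoodd
  obtain ⟨S, M, hSind, hM, hcard⟩ := konig H G hle c hc
  have hSG : IsIndep G (S \ {v₀}) := by
    intro x hx y hy hne hadj
    exact hSind hx.1 hy.1 hne ⟨hadj, hx.2, hy.2⟩
  have h1 : (S \ {v₀}).ncard ≤ alphaNum G := alpha_le_of_indep G hSG
  have h2 : M.edgeSet.ncard ≤ muNum G := mu_le_of_matching G hM
  have h3 : S.ncard ≤ (S \ {v₀}).ncard + 1 := by
    by_cases hv : v₀ ∈ S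
    · rw [Set.ncard_diff_singleton_add_one hv S.toFinite]
    · rw [Set.diff_singleton_eq_self hv]
      omega
  omega
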